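/- For every m ≥ 2 and r ≥ 1, the factor monoid M(w_{m,r}) of the word w_{m,r} = x^{m−1} t₁ x^{m−1} t₂ ⋯ t_r x^{m−1} satisfies the identity x^{m+1} ≈ x^m and the identity x^m t ≈ t x^m. -/

import Mathlib

abbrev Word := List ℕ

def subst (φ : ℕ → Word) (w : Word) : Word := w.flatMap φ

inductive Deduce (S : Set (Word × Word)) : Word → Word → Prop
  | refl (w : Word) : Deduce S w w
  | symm {u v : Word} : Deduce S u v → Deduce S v u
  | trans {u v w : Word} : Deduce S u v → Deduce S v w → Deduce S u w
  | step (a b : Word) (φ : ℕ → Word) {s t : Word} (h : (s, t) ∈ S) :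
      Deduce S (a ++ subst φ s ++ b) (a ++ subst φ t ++ b)

def FM (w : Word) : Type := Option {u : Word // u <:+: w}

def fmul {w : Word} : FM w → FM w → FM w
  | some u, some v =>
      if h : (u.1 ++ v.1) <:+: w then some ⟨u.1 ++ v.1, h⟩ else none
  | _, _ => none

def fone (w : Word) : FM w := some ⟨[], List.nil_infix⟩

theorem fmul_none_left {w : Word} (a : FM w) : fmul none a = none := rfl

theorem fmul_none_right {w : Word} (a : FM w) : fmul a none = none := by
  rcases a with _ | u <;> rfl

theorem fmul_some {w : Word} (u v : {u : Word // u <:+: w}) :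
    fmul (some u) (some v) =
      if h : (u.1 ++ v.1) <:+: w then some ⟨u.1 ++ v.1, h⟩ else none := rfl

theorem fmul_assoc {w : Word} (a b c : FM w) : fmul (fmul a b) c = fmul a (fmul b c) := by
  rcases a with _ | u
  · rfl
  rcases b with _ | v
  · rfl
  rcases c with _ | t
  · rw [fmul_none_right]; rfl
  rw [fmul_some, fmul_some]
  by_cases h : (u.1 ++ v.1 ++ t.1) <:+: w
  · have h1 : (u.1 ++ v.1) <:+: w := List.IsInfix.trans ⟨[], t.1, by simp⟩ h
    have h2 : (v.1 ++ t.1) <:+: w := List.IsInfix.trans ⟨u.1, [], by simp⟩ h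
    rw [dif_pos h1, fmul_some, dif_pos h2, fmul_some, dif_pos h,
      dif_pos (show (u.1 ++ (v.1 ++ t.1)) <:+: w by simpa [List.append_assoc] using h)]
    simp [List.append_assoc]; rfl
  · by_cases h1 : (u.1 ++ v.1) <:+: w
    · rw [dif_pos h1, fmul_some, dif_neg h]
      by_cases h2 : (v.1 ++ t.1) <:+: w
      · rw [dif_pos h2, fmul_some,
          dif_neg (fun hh => h (by simpa [List.append_assoc] using hh))]
      · rw [dif_neg h2]; rfl
    · rw [dif_neg h1]
      change (none : FM w) = _
      by_cases h2 : (v.1 ++ t.1) <:+: w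
      · rw [dif_pos h2, fmul_some,
          dif_neg (fun hh => h1 (List.IsInfix.trans ⟨[], t.1, by simp⟩ hh))]
      · rw [dif_neg h2]; rfl

instance (w : Word) : Monoid (FM w) where
  mul := fmul
  one := fone w
  mul_assoc := fmul_assoc
  one_mul := by
    rintro (_ | u)
    · rfl
    · show fmul (fone w) (some u) = some u
      rw [fone, fmul_some, dif_pos (by simpa using u.2)]
      simp; rfl
  mul_one := by
    rintro (_ | u)
    · rfl
    · show fmul (some u) (fone w) = some u
      rw [fone, fmul_some, dif_pos (by simpa using u.2)]
      simp; rfl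

def SatId (M : Type) [Monoid M] (p : Word × Word) : Prop :=
  ∀ φ : ℕ → M, (p.1.map φ).prod = (p.2.map φ).prod

def VSat (E : Set (Word × Word)) (p : Word × Word) : Prop :=
  ∀ (M : Type) [Monoid M], (∀ q ∈ E, SatId M q) → SatId M p

def ids0 : Set (Word × Word) :=
  {([0,1,2,0,3,1],[1,0,2,0,3,1]), ([0,2,0,1,3,1],[0,2,1,0,3,1]), ([0,2,1,3,0,1],[0,2,1,3,1,0])}

def idA (n : ℕ) : Word × Word :=
  (List.replicate n 0 ++ (List.range n).map (· + 1),
   ((List.range n).map (fun i => [i + 1, 0])).flatten)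

def rigid (e₀ : ℕ) (es : List ℕ) : Word :=
  List.replicate e₀ 0 ++ (es.zipIdx.map (fun p => (p.2 + 1) :: List.replicate p.1 0)).flatten

def Bword (n i : ℕ) : Word := List.replicate i 0 ++ 1 :: List.replicate (n - 1 - i) 0

def wmr (m r : ℕ) : Word := rigid (m - 1) (List.replicate r (m - 1))


section Aux

open List

def fnone (w : Word) : FM w := none

lemma aux_zip_replicate (l : List ℕ) (a : ℕ) :
    l.zip (replicate l.length a) = l.map (fun x => (x, a)) := by
  induction l with
  | nil => rfl
  | cons x t ih => rw [length_cons, replicate_succ, zip_cons_cons, ih, map_cons]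

lemma aux_wmr_eq (m r : ℕ) :
    wmr m r = replicate (m - 1) 0 ++
      ((range r).map (fun i => (i + 1) :: replicate (m - 1) 0)).flatten := by
  unfold wmr rigid
  congr 1
  congr 1
  apply List.ext_getElem <;> simp

lemma aux_count_blocks (m r c : ℕ) (hc : c ≠ 0) :
    count c (((range r).map (fun i => (i + 1) :: replicate (m - 1) 0)).flatten)
      = if 1 ≤ c ∧ c ≤ r then 1 else 0 := by
  induction r with
  | zero =>
    simp only [range_zero, map_nil, flatten_nil, count_nil]
    rw [if_neg (by omega)]
  | succ r ih =>
    rw [range_succ, map_append, flatten_append, count_append, ih]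
    simp only [map_cons, map_nil, flatten_cons, flatten_nil, append_nil]
    have hblock : count c ((r + 1) :: replicate (m - 1) 0) = if c = r + 1 then 1 else 0 := by
      simp only [count_cons, count_replicate, beq_iff_eq]
      split_ifs <;> omega
    rw [hblock]
    split_ifs <;> omega

lemma aux_count_wmr (m r c : ℕ) (hc : c ≠ 0) : count c (wmr m r) ≤ 1 := by
  rw [aux_wmr_eq, count_append, count_replicate, aux_count_blocks m r c hc]
  simp only [beq_iff_eq]
  split_ifs <;> omega

lemma aux_prefix_split {l A B : Word} (h : l <+: A ++ B) :
    l <+: A ∨ ∃ l2, l = A ++ l2 ∧ l2 <+: B := by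
  rcases h with ⟨t, ht⟩
  rcases append_eq_append_iff.mp ht with ⟨a', ha, _⟩ | ⟨c', hc, hd⟩
  · exact Or.inl ⟨a', ha.symm⟩
  · exact Or.inr ⟨c', hc, t, hd.symm⟩

lemma aux_infix_split {l A B : Word} (h : l <:+: A ++ B) :
    l <:+: A ∨ l <:+: B ∨ ∃ l1 l2, l = l1 ++ l2 ∧ l1 <:+ A ∧ l2 <+: B := by
  induction A with
  | nil => exact Or.inr (Or.inl h)
  | cons a A' ih =>
    rw [cons_append, infix_cons_iff] at h
    rcases h with h | h
    · rw [← cons_append] at h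
      rcases aux_prefix_split h with h | ⟨l2, hl, hp⟩
      · exact Or.inl h.isInfix
      · exact Or.inr (Or.inr ⟨a :: A', l2, hl, suffix_refl _, hp⟩)
    · rcases ih h with h | h | ⟨l1, l2, h1, h2, h3⟩
      · exact Or.inl (h.trans (infix_cons (infix_refl A')))
      · exact Or.inr (Or.inl h)
      · exact Or.inr (Or.inr ⟨l1, l2, h1, h2.trans (suffix_cons a A'), h3⟩)

lemma aux_zeros_step {m k c : ℕ} {A : Word} (hm : 0 < m) (hc : c ≠ 0) (hk : k < m)
    (hA : ¬ replicate m 0 <:+: A) :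
    ¬ replicate m 0 <:+: A ++ c :: replicate k 0 := by
  intro h
  rcases aux_infix_split h with h | h | ⟨l1, l2, h1, h2, h3⟩
  · exact hA h
  · rcases h with ⟨s, t, hst⟩
    cases s with
    | nil =>
      obtain ⟨m', rfl⟩ : ∃ m', m = m' + 1 := ⟨m - 1, by omega⟩
      rw [nil_append, replicate_succ, cons_append, cons.injEq] at hst
      exact hc hst.1.symm
    | cons x s' =>
      simp only [cons_append, cons.injEq] at hst
      have : replicate m 0 <:+: replicate k 0 := ⟨s', t, hst.2⟩
      have := this.length_le
      simp only [length_replicate] at this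
      omega
  · cases l2 with
    | nil =>
      rw [append_nil] at h1
      exact hA (h1 ▸ h2.isInfix)
    | cons x l2' =>
      have hx : x = 0 := by
        have : x ∈ replicate m 0 := by
          rw [h1]
          exact mem_append_right _ mem_cons_self
        exact eq_of_mem_replicate this
      rcases h3 with ⟨t, ht⟩
      rw [cons_append, cons.injEq] at ht
      exact hc (hx ▸ ht.1).symm

lemma aux_no_zeros (m r : ℕ) (hm : 2 ≤ m) : ¬ replicate m 0 <:+: wmr m r := by
  rw [aux_wmr_eq]
  induction r with
  | zero =>
    simp only [range_zero, map_nil, flatten_nil, append_nil]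
    intro h
    have := h.length_le
    simp only [length_replicate] at this
    omega
  | succ r ih =>
    rw [range_succ, map_append, flatten_append, ← append_assoc]
    simp only [map_cons, map_nil, flatten_cons, flatten_nil, append_nil]
    exact aux_zeros_step (by omega) (Nat.succ_ne_zero r) (by omega) ih

lemma aux_count_flatten_replicate (n : ℕ) (u : Word) (c : ℕ) :
    count c (replicate n u).flatten = n * count c u := by
  rw [count_flatten, map_replicate, sum_replicate, smul_eq_mul]

lemma aux_flatten_not_infix {m r : ℕ} (hm : 2 ≤ m) {u : Word} (hu : u ≠ []) :
    ¬ (replicate m u).flatten <:+: wmr m r := by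
  intro h
  by_cases hz : ∃ c ∈ u, c ≠ 0
  · rcases hz with ⟨c, hcu, hc⟩
    have h1 : m * count c u ≤ count c (wmr m r) := by
      rw [← aux_count_flatten_replicate]
      exact h.sublist.count_le c
    have h2 : 1 ≤ count c u := count_pos_iff.mpr hcu
    have h3 := aux_count_wmr m r c hc
    nlinarith
  · push_neg at hz
    have hrep : u = replicate u.length 0 := eq_replicate_iff.mpr ⟨rfl, hz⟩
    have hfl : (replicate m u).flatten = replicate (m * u.length) 0 := by
      refine eq_replicate_iff.mpr ⟨?_, ?_⟩
      · rw [length_flatten, map_replicate, sum_replicate, smul_eq_mul]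
      · intro b hb
        rcases mem_flatten.mp hb with ⟨l, hl, hbl⟩
        have := eq_of_mem_replicate hl
        subst this
        exact hz b hbl
    have hle : m ≤ m * u.length := Nat.le_mul_of_pos_right m (by
      cases u with
      | nil => exact absurd rfl hu
      | cons a t => simp)
    have hin : replicate m 0 <:+: replicate (m * u.length) 0 := by
      refine (prefix_iff_eq_take.mpr ?_).isInfix
      rw [take_replicate, length_replicate, min_eq_left hle]
    exact aux_no_zeros m r hm (hin.trans (hfl ▸ h))

lemma aux_pow_some {w : Word} (a : FM w) (u : {u : Word // u <:+: w})
    (ha : a = some u) (n : ℕ) :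
    a ^ n = fnone w ∨
    ∃ h : (replicate n u.1).flatten <:+: w,
      a ^ n = some ⟨(replicate n u.1).flatten, h⟩ := by
  induction n with
  | zero =>
    right
    refine ⟨by simp, ?_⟩
    rw [pow_zero]
    rfl
  | succ n ih =>
    rw [pow_succ]
    rcases ih with h | ⟨hinf, heq⟩
    · left
      rw [h]
      exact rfl
    · by_cases hc : ((replicate n u.1).flatten ++ u.1) <:+: w
      · right
        refine ⟨by rw [replicate_succ', flatten_append]; simpa using hc, ?_⟩
        rw [heq, ha]
        show fmul _ _ = _
        rw [fmul_some, dif_pos hc]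
        exact congrArg some (Subtype.ext (by simp [replicate_succ', flatten_append]))
      · left
        rw [heq, ha]
        show fmul _ _ = _
        rw [fmul_some, dif_neg hc]
        rfl

lemma aux_none_pow {w : Word} (n : ℕ) (hn : 1 ≤ n) : (fnone w) ^ n = fnone w := by
  obtain ⟨k, rfl⟩ : ∃ k, n = k + 1 := ⟨n - 1, by omega⟩
  rw [pow_succ]
  exact fmul_none_right _

lemma aux_mul_none_left {w : Word} (a : FM w) : fnone w * a = fnone w := rfl
lemma aux_mul_none_right {w : Word} (a : FM w) : a * fnone w = fnone w :=
  fmul_none_right a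

end Aux

/-- For every `m ≥ 2` and `r ≥ 1`, the factor monoid of
`w_{m,r} = x^{m-1} t₁ x^{m-1} ⋯ t_r x^{m-1}` satisfies `x^{m+1} ≈ x^m` and
`x^m t ≈ t x^m`. -/
theorem stmt12 (m r : ℕ) (hm : 2 ≤ m) (hr : 1 ≤ r) :
    SatId (FM (wmr m r)) (List.replicate (m + 1) 0, List.replicate m 0) ∧
    SatId (FM (wmr m r)) (List.replicate m 0 ++ [1], 1 :: List.replicate m 0) := by
  have key : ∀ a : FM (wmr m r), a ^ (m + 1) = a ^ m ∧ (a ^ m = 1 ∨ a ^ m = fnone _) := by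
    intro a
    have hcases : (∃ u, a = some u) ∨ a = fnone _ := by
      rcases a with _ | u
      exacts [Or.inr rfl, Or.inl ⟨u, rfl⟩]
    rcases hcases with ⟨u, ha⟩ | ha
    · rcases hu : u.1 with _ | ⟨x, t⟩
      · have h1 : a = 1 := by
          rw [ha]
          show _ = fone _
          exact congrArg some (Subtype.ext hu)
        rw [h1, one_pow, one_pow]
        exact ⟨rfl, Or.inl rfl⟩
      · have hne : u.1 ≠ [] := by rw [hu]; exact List.cons_ne_nil x t
        have hm' : a ^ m = fnone _ := by
          rcases aux_pow_some a u ha m with h | ⟨hinf, _⟩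
          · exact h
          · exact absurd hinf (aux_flatten_not_infix hm hne)
        refine ⟨?_, Or.inr hm'⟩
        rw [pow_succ, hm', aux_mul_none_left]
    · have h1 : ∀ n, 1 ≤ n → a ^ n = fnone _ := fun n hn => by
        rw [ha]; exact aux_none_pow n hn
      rw [h1 (m+1) (by omega), h1 m (by omega)]
      exact ⟨rfl, Or.inr rfl⟩
  constructor
  · intro φ
    simp only [List.map_replicate, List.prod_replicate]
    exact (key (φ 0)).1
  · intro φ
    simp only [List.map_append, List.map_cons, List.map_nil, List.prod_append,
      List.map_replicate, List.prod_replicate, List.prod_cons, List.prod_nil, mul_one]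
    rcases (key (φ 0)).2 with h | h
    · rw [h, one_mul, mul_one]
    · rw [h, aux_mul_none_left, aux_mul_none_right]
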